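/- Suppose p and q are Borel probability measures on ℝ^n, absolutely continuous with respect to Lebesgue measure, with density representatives ρ_p and ρ_q, and suppose there is a constant C > 1 such that 1/C < ρ_p(x) < C for every x ∈ supp(p) and ρ_p(x) = 0 for every x ∉ supp(p), and likewise 1/C < ρ_q(x) < C for every x ∈ supp(q) and ρ_q(x) = 0 for every x ∉ supp(q). Let f* be the optimal discriminator. Then D_△(p, q) = 0 if and only if D_△(f*♯p, f*♯q) = 0, where the latter divergence is computed for the pushforward measures on ℝ with the absolute-value metric. -/

import Mathlib

open MeasureTheory Metric Set
open scoped ENNReal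

noncomputable section

/-- The topological support of a Borel measure: the smallest closed set of full measure,
realized as the intersection of all closed sets whose complement is null. -/
def msupport {X : Type*} [TopologicalSpace X] [MeasurableSpace X] (μ : Measure X) : Set X :=
  ⋂₀ {S : Set X | IsClosed S ∧ μ Sᶜ = 0}

/-- The symmetric support difference (SSD) divergence
`D_△(p, q) = ∫ d(x, supp q) dp + ∫ d(x, supp p) dq` (valued in `ℝ≥0∞`). -/
def Dtri {X : Type*} [MeasurableSpace X] [PseudoMetricSpace X] (p q : Measure X) : ℝ≥0∞ :=
  (∫⁻ x, ENNReal.ofReal (infDist x (msupport q)) ∂p) +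
  (∫⁻ x, ENNReal.ofReal (infDist x (msupport p)) ∂q)

/-- The Wasserstein-1 distance: infimum of `∫ d(x, y) dγ` over couplings of `p` and `q`. -/
def DW {X : Type*} [MeasurableSpace X] [PseudoMetricSpace X] (p q : Measure X) : ℝ≥0∞ :=
  ⨅ γ ∈ {γ : Measure (X × X) | γ.map Prod.fst = p ∧ γ.map Prod.snd = q},
    ∫⁻ z, ENNReal.ofReal (dist z.1 z.2) ∂γ

/-- The β-admissible Wasserstein distance: infimum of `∫ d(x, y) dγ` over measures `γ`
whose first marginal is `p` and whose second marginal is `≤ (1 + β) • q`. -/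
def DWbeta {X : Type*} [MeasurableSpace X] [PseudoMetricSpace X]
    (β : ℝ) (p q : Measure X) : ℝ≥0∞ :=
  ⨅ γ ∈ {γ : Measure (X × X) |
      γ.map Prod.fst = p ∧ γ.map Prod.snd ≤ (ENNReal.ofReal (1 + β)) • q},
    ∫⁻ z, ENNReal.ofReal (dist z.1 z.2) ∂γ

/-- The symmetrized (β₁, β₂)-admissible Wasserstein distance. -/
def DWsym {X : Type*} [MeasurableSpace X] [PseudoMetricSpace X]
    (β₁ β₂ : ℝ) (p q : Measure X) : ℝ≥0∞ :=
  DWbeta β₁ p q + DWbeta β₂ q p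

lemma isClosed_msupport {X : Type*} [TopologicalSpace X] [MeasurableSpace X] (μ : Measure X) :
    IsClosed (msupport μ) :=
  isClosed_sInter fun _ hS => hS.1

lemma msupport_subset {X : Type*} [TopologicalSpace X] [MeasurableSpace X] (μ : Measure X)
    {S : Set X} (h1 : IsClosed S) (h2 : μ Sᶜ = 0) : msupport μ ⊆ S :=
  sInter_subset_of_mem ⟨h1, h2⟩

lemma measure_compl_msupport {X : Type*} [TopologicalSpace X] [SecondCountableTopology X]
    [MeasurableSpace X] (μ : Measure X) : μ (msupport μ)ᶜ = 0 := by
  have h : (msupport μ)ᶜ = ⋃₀ (compl '' {S : Set X | IsClosed S ∧ μ Sᶜ = 0}) :=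
    compl_sInter _
  obtain ⟨T, hTc, hTsub, hTU⟩ := TopologicalSpace.isOpen_sUnion_countable
    (compl '' {S : Set X | IsClosed S ∧ μ Sᶜ = 0})
    (by rintro s ⟨S, ⟨hS1, _⟩, rfl⟩; exact hS1.isOpen_compl)
  rw [h, ← hTU, measure_sUnion_null_iff hTc]
  intro t ht
  obtain ⟨S, ⟨_, hS2⟩, rfl⟩ := hTsub ht
  exact hS2

lemma msupport_nonempty {X : Type*} [TopologicalSpace X] [SecondCountableTopology X]
    [MeasurableSpace X] (μ : Measure X) [IsProbabilityMeasure μ] :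
    (msupport μ).Nonempty := by
  rcases eq_empty_or_nonempty (msupport μ) with h | h
  · exfalso
    have h0 := measure_compl_msupport μ
    rw [h, compl_empty, measure_univ] at h0
    exact one_ne_zero h0
  · exact h

lemma lintegral_infDist_eq_zero_iff {X : Type*} [MeasurableSpace X] [MetricSpace X]
    [OpensMeasurableSpace X] (μ : Measure X)
    {S : Set X} (hS : IsClosed S) (hne : S.Nonempty) :
    ∫⁻ x, ENNReal.ofReal (infDist x S) ∂μ = 0 ↔ μ Sᶜ = 0 := by
  rw [lintegral_eq_zero_iff ((continuous_infDist_pt S).measurable.ennreal_ofReal)]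
  have key : ∀ x : X, (ENNReal.ofReal (infDist x S) = 0) ↔ x ∈ S := by
    intro x
    rw [ENNReal.ofReal_eq_zero]
    constructor
    · intro h
      exact (hS.mem_iff_infDist_zero hne).2 (le_antisymm h infDist_nonneg)
    · intro h
      rw [(hS.mem_iff_infDist_zero hne).1 h]
  have hset : {x : X | ¬ (ENNReal.ofReal (infDist x S) = (0 : X → ℝ≥0∞) x)} = Sᶜ := by
    ext x
    simp only [mem_setOf_eq, Pi.zero_apply, mem_compl_iff]
    exact not_congr (key x)
  rw [Filter.EventuallyEq, ae_iff, hset]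

lemma Dtri_eq_zero_iff {X : Type*} [MeasurableSpace X] [MetricSpace X]
    [SecondCountableTopology X] [OpensMeasurableSpace X]
    (p q : Measure X) [IsProbabilityMeasure p] [IsProbabilityMeasure q] :
    Dtri p q = 0 ↔ p (msupport q)ᶜ = 0 ∧ q (msupport p)ᶜ = 0 := by
  rw [Dtri, add_eq_zero,
    lintegral_infDist_eq_zero_iff p (isClosed_msupport q) (msupport_nonempty q),
    lintegral_infDist_eq_zero_iff q (isClosed_msupport p) (msupport_nonempty p)]

lemma ac_aux {X : Type*} [MeasurableSpace X] (μ0 p q : Measure X)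
    (ρ σ : X → ℝ)
    (hp : p = μ0.withDensity (fun x => ENNReal.ofReal (ρ x)))
    (hq : q = μ0.withDensity (fun x => ENNReal.ofReal (σ x)))
    (Sp Sq : Set X) (hSp : MeasurableSet Sp) (hSq : MeasurableSet Sq)
    (C : ℝ) (hC : 1 < C)
    (hρ_lb : ∀ x ∈ Sp, 1 / C < ρ x) (hρ_ub : ∀ x ∈ Sp, ρ x < C)
    (hρ0 : ∀ x ∉ Sp, ρ x = 0)
    (hσ_lb : ∀ x ∈ Sq, 1 / C < σ x)
    (hpq : p Sqᶜ = 0) : p ≪ q := by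
  have hC0 : (0 : ℝ) < C := lt_trans one_pos hC
  have h1C : (0 : ℝ) < 1 / C := by positivity
  set N : Set X := Sp ∩ Sqᶜ with hN
  have hNmeas : MeasurableSet N := hSp.inter hSq.compl
  have hpN : p N = 0 := measure_mono_null inter_subset_right hpq
  have hμ0N : μ0 N = 0 := by
    have h1 : ENNReal.ofReal (1 / C) * μ0 N ≤ p N := by
      rw [hp, withDensity_apply _ hNmeas, ← setLIntegral_const N (ENNReal.ofReal (1 / C))]
      refine setLIntegral_mono' hNmeas fun x hx => ?_
      exact ENNReal.ofReal_le_ofReal (hρ_lb x hx.1).le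
    rw [hpN, le_zero_iff] at h1
    rcases mul_eq_zero.1 h1 with h | h
    · exact absurd (ENNReal.ofReal_eq_zero.1 h) (not_le.2 h1C)
    · exact h
  have hkey : ∀ᵐ x ∂μ0,
      ENNReal.ofReal (ρ x) ≤ ENNReal.ofReal (C ^ 2) * ENNReal.ofReal (σ x) := by
    rw [ae_iff]
    refine measure_mono_null (fun x hx => ?_) hμ0N
    simp only [mem_setOf_eq, not_le] at hx
    by_contra hxN
    apply absurd hx
    push_neg
    by_cases hxp : x ∈ Sp
    · have hxq : x ∈ Sq := by
        by_contra hxq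
        exact hxN ⟨hxp, hxq⟩
      have hσx : 1 / C < σ x := hσ_lb x hxq
      have hσx' : 1 < σ x * C := (div_lt_iff₀ hC0).1 hσx
      have hb : ρ x ≤ C ^ 2 * σ x := by
        nlinarith [mul_nonneg (by linarith : (0:ℝ) ≤ σ x * C - 1) hC0.le, hρ_ub x hxp]
      calc ENNReal.ofReal (ρ x) ≤ ENNReal.ofReal (C ^ 2 * σ x) := ENNReal.ofReal_le_ofReal hb
        _ = ENNReal.ofReal (C ^ 2) * ENNReal.ofReal (σ x) := ENNReal.ofReal_mul (by positivity)
    · simp [hρ0 x hxp]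
  refine Measure.AbsolutelyContinuous.mk fun A hA hqA => ?_
  have h2 : p A ≤ ENNReal.ofReal (C ^ 2) * q A := by
    rw [hp, hq, withDensity_apply _ hA, withDensity_apply _ hA]
    calc ∫⁻ x in A, ENNReal.ofReal (ρ x) ∂μ0
        ≤ ∫⁻ x in A, ENNReal.ofReal (C ^ 2) * ENNReal.ofReal (σ x) ∂μ0 :=
          lintegral_mono_ae (ae_restrict_of_ae hkey)
      _ = ENNReal.ofReal (C ^ 2) * ∫⁻ x in A, ENNReal.ofReal (σ x) ∂μ0 :=
          lintegral_const_mul' _ _ ENNReal.ofReal_ne_top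
  rw [hqA, mul_zero, le_zero_iff] at h2
  exact h2

/-- **Theorem 1.** For densities bounded above and away from zero on the
supports, the optimal log-loss discriminator preserves support alignment:
`D_△(p, q) = 0` iff `D_△(f*♯p, f*♯q) = 0`. -/
theorem ssd_zero_iff_pushforward_ssd_zero (n : ℕ)
    (p q : Measure (EuclideanSpace ℝ (Fin n)))
    [IsProbabilityMeasure p] [IsProbabilityMeasure q]
    (ρp ρq : EuclideanSpace ℝ (Fin n) → ℝ)
    (hρp_meas : Measurable ρp) (hρq_meas : Measurable ρq)
    (hp : p = volume.withDensity (fun x => ENNReal.ofReal (ρp x)))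
    (hq : q = volume.withDensity (fun x => ENNReal.ofReal (ρq x)))
    (C : ℝ) (hC : 1 < C)
    (hρp_bound : ∀ x ∈ msupport p, 1 / C < ρp x ∧ ρp x < C)
    (hρp_zero : ∀ x ∉ msupport p, ρp x = 0)
    (hρq_bound : ∀ x ∈ msupport q, 1 / C < ρq x ∧ ρq x < C)
    (hρq_zero : ∀ x ∉ msupport q, ρq x = 0)
    (fstar : EuclideanSpace ℝ (Fin n) → ℝ)
    (hfstar : ∀ x, fstar x =
      if 0 < ρp x + ρq x then ρp x / (ρp x + ρq x) else 1 / 2) :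
    Dtri p q = 0 ↔ Dtri (p.map fstar) (q.map fstar) = 0 := by
  have hC0 : (0 : ℝ) < C := lt_trans one_pos hC
  have h1C : (0 : ℝ) < 1 / C := by positivity
  have hf_meas : Measurable fstar := by
    have : fstar = fun x => if 0 < ρp x + ρq x then ρp x / (ρp x + ρq x) else 1 / 2 :=
      funext hfstar
    rw [this]
    exact Measurable.ite (measurableSet_lt measurable_const (hρp_meas.add hρq_meas))
      (hρp_meas.div (hρp_meas.add hρq_meas)) measurable_const
  haveI : IsProbabilityMeasure (p.map fstar) := Measure.isProbabilityMeasure_map hf_meas.aemeasurable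
  haveI : IsProbabilityMeasure (q.map fstar) := Measure.isProbabilityMeasure_map hf_meas.aemeasurable
  set t : ℝ := C ^ 2 / (C ^ 2 + 1) with ht
  have hden : (0 : ℝ) < C ^ 2 + 1 := by positivity
  have ht1 : t < 1 := by rw [ht, div_lt_one hden]; nlinarith
  have ht0 : 0 < 1 - t := by linarith
  have htpos : 0 ≤ t := by rw [ht]; positivity
  have hSp : MeasurableSet (msupport p) := (isClosed_msupport p).measurableSet
  have hSq : MeasurableSet (msupport q) := (isClosed_msupport q).measurableSet
  -- pointwise values of fstar
  have hf_p_only : ∀ x ∈ msupport p, x ∉ msupport q → fstar x = 1 := by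
    intro x hxp hxq
    have h1 : 1 / C < ρp x := (hρp_bound x hxp).1
    have h2 : ρq x = 0 := hρq_zero x hxq
    rw [hfstar x, if_pos (by linarith), h2, add_zero, div_self (by linarith)]
  have hf_q_le : ∀ x ∈ msupport q, fstar x ≤ t := by
    intro x hxq
    have hq1 : 1 / C < ρq x := (hρq_bound x hxq).1
    have hq1' : 1 < ρq x * C := (div_lt_iff₀ hC0).1 hq1
    by_cases hxp : x ∈ msupport p
    · have hp1 : 1 / C < ρp x := (hρp_bound x hxp).1
      have hp2 : ρp x < C := (hρp_bound x hxp).2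
      rw [hfstar x, if_pos (by linarith)]
      rw [ht, div_le_div_iff₀ (by linarith) hden]
      nlinarith
    · have h0 : ρp x = 0 := hρp_zero x hxp
      rw [hfstar x, if_pos (by rw [h0]; linarith), h0, zero_div]
      positivity
  have hf_q_only : ∀ x ∈ msupport q, x ∉ msupport p → fstar x = 0 := by
    intro x hxq hxp
    have h0 : ρp x = 0 := hρp_zero x hxp
    have hq1 : 1 / C < ρq x := (hρq_bound x hxq).1
    rw [hfstar x, if_pos (by rw [h0]; linarith), h0, zero_div]
  have hf_p_ge : ∀ x ∈ msupport p, 1 - t ≤ fstar x := by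
    intro x hxp
    have hp1 : 1 / C < ρp x := (hρp_bound x hxp).1
    have hp1' : 1 < ρp x * C := (div_lt_iff₀ hC0).1 hp1
    by_cases hxq : x ∈ msupport q
    · have hq1 : 1 / C < ρq x := (hρq_bound x hxq).1
      have hq2 : ρq x < C := (hρq_bound x hxq).2
      rw [hfstar x, if_pos (by linarith)]
      have h1t : 1 - t = 1 / (C ^ 2 + 1) := by
        rw [ht]; field_simp; ring
      rw [h1t, div_le_div_iff₀ hden (by linarith)]
      nlinarith
    · rw [hf_p_only x hxp hxq]; linarith
  rw [Dtri_eq_zero_iff p q, Dtri_eq_zero_iff (p.map fstar) (q.map fstar)]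
  constructor
  · rintro ⟨hpq, hqp⟩
    have hpac : p ≪ q := ac_aux volume p q ρp ρq hp hq (msupport p) (msupport q) hSp hSq C hC
      (fun x hx => (hρp_bound x hx).1) (fun x hx => (hρp_bound x hx).2) hρp_zero
      (fun x hx => (hρq_bound x hx).1) hpq
    have hqac : q ≪ p := ac_aux volume q p ρq ρp hq hp (msupport q) (msupport p) hSq hSp C hC
      (fun x hx => (hρq_bound x hx).1) (fun x hx => (hρq_bound x hx).2) hρq_zero
      (fun x hx => (hρp_bound x hx).1) hqp
    constructor
    · have hmeas : MeasurableSet (msupport (q.map fstar))ᶜ :=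
        (isClosed_msupport (q.map fstar)).measurableSet.compl
      rw [Measure.map_apply hf_meas hmeas]
      apply hpac
      rw [← Measure.map_apply hf_meas hmeas]
      exact measure_compl_msupport _
    · have hmeas : MeasurableSet (msupport (p.map fstar))ᶜ :=
        (isClosed_msupport (p.map fstar)).measurableSet.compl
      rw [Measure.map_apply hf_meas hmeas]
      apply hqac
      rw [← Measure.map_apply hf_meas hmeas]
      exact measure_compl_msupport _
  · rintro ⟨h1, h2⟩
    have hsubq : msupport (q.map fstar) ⊆ Iic t := by
      refine msupport_subset _ isClosed_Iic ?_
      rw [Measure.map_apply hf_meas measurableSet_Iic.compl]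
      refine measure_mono_null (fun x hx => ?_) (measure_compl_msupport q)
      intro hxq
      exact hx (hf_q_le x hxq)
    have hsubp : msupport (p.map fstar) ⊆ Ici (1 - t) := by
      refine msupport_subset _ isClosed_Ici ?_
      rw [Measure.map_apply hf_meas measurableSet_Ici.compl]
      refine measure_mono_null (fun x hx => ?_) (measure_compl_msupport p)
      intro hxp
      exact hx (hf_p_ge x hxp)
    constructor
    · -- p (msupport q)ᶜ = 0
      have hone : ({1} : Set ℝ) ⊆ (msupport (q.map fstar))ᶜ := by
        intro y hy
        rw [mem_singleton_iff] at hy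
        subst hy
        intro hmem
        exact absurd (hsubq hmem) (by simp [not_le.mpr ht1])
      have hpre : p (fstar ⁻¹' {1}) = 0 := by
        rw [← Measure.map_apply hf_meas (measurableSet_singleton 1)]
        exact measure_mono_null hone h1
      refine le_antisymm ?_ zero_le
      calc p (msupport q)ᶜ ≤ p (fstar ⁻¹' {1} ∪ (msupport p)ᶜ) := by
            refine measure_mono fun x hx => ?_
            by_cases hxp : x ∈ msupport p
            · exact Or.inl (hf_p_only x hxp hx)
            · exact Or.inr hxp
        _ ≤ p (fstar ⁻¹' {1}) + p (msupport p)ᶜ := measure_union_le _ _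
        _ = 0 := by rw [hpre, measure_compl_msupport, add_zero]
    · -- q (msupport p)ᶜ = 0
      have hzero : ({0} : Set ℝ) ⊆ (msupport (p.map fstar))ᶜ := by
        intro y hy
        rw [mem_singleton_iff] at hy
        subst hy
        intro hmem
        exact absurd (hsubp hmem) (by simpa using ht0)
      have hpre : q (fstar ⁻¹' {0}) = 0 := by
        rw [← Measure.map_apply hf_meas (measurableSet_singleton 0)]
        exact measure_mono_null hzero h2
      refine le_antisymm ?_ zero_le
      calc q (msupport p)ᶜ ≤ q (fstar ⁻¹' {0} ∪ (msupport q)ᶜ) := by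
            refine measure_mono fun x hx => ?_
            by_cases hxq : x ∈ msupport q
            · exact Or.inl (hf_q_only x hxq hx)
            · exact Or.inr hxq
        _ ≤ q (fstar ⁻¹' {0}) + q (msupport q)ᶜ := measure_union_le _ _
        _ = 0 := by rw [hpre, measure_compl_msupport, add_zero]
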